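/- arXiv:2405.15814 — 2 statements merged into one kernel-verified Lean document; each statement's English description precedes it below -/
import Mathlib

section
/- Let A and B be Hilbert spaces and let T : A → B be a compact linear operator. Then the dual operator T' : B' → A' (between the continuous dual spaces) satisfies e_k(T') = e_k(T) for every k ∈ ℕ, k ≥ 1. -/
noncomputable section

/-- The `k`-th (dyadic) entropy number of a bounded linear operator `T : A → B`:
the infimum of all `ε > 0` such that `T(U_A)` can be covered by `2^(k-1)` closed
balls of radius `ε` in `B`. -/
def entropyNumber {A B : Type*} [NormedAddCommGroup A] [NormedSpace ℂ A]
    [NormedAddCommGroup B] [NormedSpace ℂ B] (k : ℕ) (T : A →L[ℂ] B) : ℝ :=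
  sInf {ε : ℝ | 0 < ε ∧ ∃ b : Fin (2 ^ (k - 1)) → B,
    T '' Metric.closedBall 0 1 ⊆ ⋃ j, Metric.closedBall (b j) ε}

/-- The dual operator `T' : B' → A'` of a bounded linear operator `T : A → B`,
given by `(T' g)(a) = g (T a)`. -/
def dualOp {A B : Type*} [NormedAddCommGroup A] [NormedSpace ℂ A]
    [NormedAddCommGroup B] [NormedSpace ℂ B] (T : A →L[ℂ] B) :
    (B →L[ℂ] ℂ) →L[ℂ] (A →L[ℂ] ℂ) :=
  (ContinuousLinearMap.compL ℂ A B ℂ).flip T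

open scoped InnerProductSpace NNReal

section EntropyLemmas

variable {A B C : Type*} [NormedAddCommGroup A] [NormedSpace ℂ A]
    [NormedAddCommGroup B] [NormedSpace ℂ B]
    [NormedAddCommGroup C] [NormedSpace ℂ C]

/-- The defining set of `entropyNumber` is nonempty. -/
theorem entropySet_nonempty (k : ℕ) (T : A →L[ℂ] B) :
    Set.Nonempty {ε : ℝ | 0 < ε ∧ ∃ b : Fin (2 ^ (k - 1)) → B,
      T '' Metric.closedBall 0 1 ⊆ ⋃ j, Metric.closedBall (b j) ε} := by
  refine ⟨‖T‖ + 1, by positivity, fun _ => 0, ?_⟩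
  rintro y ⟨x, hx, rfl⟩
  have hx1 : ‖x‖ ≤ 1 := by simpa [Metric.mem_closedBall, dist_zero_right] using hx
  refine Set.mem_iUnion.2 ⟨⟨0, by positivity⟩, ?_⟩
  simp only [Metric.mem_closedBall, dist_zero_right]
  calc ‖T x‖ ≤ ‖T‖ * ‖x‖ := T.le_opNorm x
    _ ≤ ‖T‖ * 1 := by nlinarith [norm_nonneg T]
    _ ≤ ‖T‖ + 1 := by nlinarith [norm_nonneg T]

theorem entropySet_bddBelow (k : ℕ) (T : A →L[ℂ] B) :
    BddBelow {ε : ℝ | 0 < ε ∧ ∃ b : Fin (2 ^ (k - 1)) → B,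
      T '' Metric.closedBall 0 1 ⊆ ⋃ j, Metric.closedBall (b j) ε} :=
  ⟨0, fun _ hε => hε.1.le⟩

/-- Post-composition with a contraction does not increase entropy numbers. -/
theorem entropyNumber_comp_left_le (k : ℕ) (S : B →L[ℂ] C) (R : A →L[ℂ] B)
    (hS : ‖S‖ ≤ 1) : entropyNumber k (S ∘L R) ≤ entropyNumber k R := by
  refine csInf_le_csInf (entropySet_bddBelow k _) (entropySet_nonempty k R) ?_
  rintro ε ⟨hε, b, hcov⟩
  refine ⟨hε, fun j => S (b j), ?_⟩
  rintro y ⟨x, hx, rfl⟩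
  have hmem : R x ∈ ⋃ j, Metric.closedBall (b j) ε := hcov ⟨x, hx, rfl⟩
  obtain ⟨j, hj⟩ := Set.mem_iUnion.1 hmem
  refine Set.mem_iUnion.2 ⟨j, ?_⟩
  simp only [Metric.mem_closedBall, dist_eq_norm] at hj ⊢
  calc ‖(S ∘L R) x - S (b j)‖ = ‖S (R x - b j)‖ := by
        rw [map_sub]; rfl
    _ ≤ ‖S‖ * ‖R x - b j‖ := S.le_opNorm _
    _ ≤ 1 * ε := mul_le_mul hS hj (norm_nonneg _) zero_le_one
    _ = ε := one_mul ε

/-- Pre-composition with a contraction does not increase entropy numbers. -/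
theorem entropyNumber_comp_right_le (k : ℕ) (S : B →L[ℂ] C) (R : A →L[ℂ] B)
    (hR : ‖R‖ ≤ 1) : entropyNumber k (S ∘L R) ≤ entropyNumber k S := by
  refine csInf_le_csInf (entropySet_bddBelow k _) (entropySet_nonempty k S) ?_
  rintro ε ⟨hε, b, hcov⟩
  refine ⟨hε, b, ?_⟩
  rintro y ⟨x, hx, rfl⟩
  have hx1 : ‖x‖ ≤ 1 := by simpa [Metric.mem_closedBall, dist_zero_right] using hx
  refine hcov ⟨R x, ?_, rfl⟩
  simp only [Metric.mem_closedBall, dist_zero_right]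
  calc ‖R x‖ ≤ ‖R‖ * ‖x‖ := R.le_opNorm x
    _ ≤ 1 * 1 := mul_le_mul hR hx1 (norm_nonneg _) zero_le_one
    _ = 1 := one_mul 1

end EntropyLemmas

/-- Factorization: if `‖S₁ x‖ = ‖S₂ x‖` for all `x`, then `S₂ = W ∘ S₁` for
a contraction `W` (with `B₁` a Hilbert space, `B₂` complete). -/
theorem exists_contraction_factor {A B₁ B₂ : Type*}
    [NormedAddCommGroup A] [NormedSpace ℂ A]
    [NormedAddCommGroup B₁] [InnerProductSpace ℂ B₁] [CompleteSpace B₁]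
    [NormedAddCommGroup B₂] [NormedSpace ℂ B₂] [CompleteSpace B₂]
    (S₁ : A →L[ℂ] B₁) (S₂ : A →L[ℂ] B₂) (h : ∀ x, ‖S₁ x‖ = ‖S₂ x‖) :
    ∃ W : B₁ →L[ℂ] B₂, ‖W‖ ≤ 1 ∧ ∀ x, W (S₁ x) = S₂ x := by
  classical
  set f₁ : A →ₗ[ℂ] B₁ := (S₁ : A →ₗ[ℂ] B₁)
  have hker : LinearMap.ker f₁ ≤ LinearMap.ker (S₂ : A →ₗ[ℂ] B₂) := by
    intro x hx
    have : S₁ x = 0 := hx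
    have h2 : ‖S₂ x‖ = 0 := by rw [← h x, this, norm_zero]
    simpa [LinearMap.mem_ker] using norm_eq_zero.mp h2
  set R : Submodule ℂ B₁ := LinearMap.range f₁ with hR
  set q : (A ⧸ LinearMap.ker f₁) ≃ₗ[ℂ] R := f₁.quotKerEquivRange
  set lift : (A ⧸ LinearMap.ker f₁) →ₗ[ℂ] B₂ :=
    Submodule.liftQ (LinearMap.ker f₁) (S₂ : A →ₗ[ℂ] B₂) hker
  set g₀ : R →ₗ[ℂ] B₂ := lift.comp (q.symm : R →ₗ[ℂ] (A ⧸ LinearMap.ker f₁))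
  have hg₀ : ∀ x : A, g₀ ⟨S₁ x, LinearMap.mem_range_self f₁ x⟩ = S₂ x := by
    intro x
    have hq : q (Submodule.Quotient.mk x) = ⟨S₁ x, LinearMap.mem_range_self f₁ x⟩ := by
      ext; exact f₁.quotKerEquivRange_apply_mk x
    have : q.symm ⟨S₁ x, LinearMap.mem_range_self f₁ x⟩ = Submodule.Quotient.mk x := by
      rw [← hq, q.symm_apply_apply]
    simp only [g₀, LinearMap.comp_apply, LinearEquiv.coe_coe, this]
    exact Submodule.liftQ_apply _ _ _
  have hiso : ∀ v : R, ‖g₀ v‖ = ‖v‖ := by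
    rintro ⟨v, hv⟩
    obtain ⟨x, rfl⟩ := hv
    have : (⟨f₁ x, LinearMap.mem_range_self f₁ x⟩ : R) = ⟨S₁ x, LinearMap.mem_range_self f₁ x⟩ := rfl
    rw [this, hg₀ x]
    simpa using (h x).symm
  set g : R →L[ℂ] B₂ := g₀.mkContinuous 1 (fun v => by rw [hiso v, one_mul])
  set K : Submodule ℂ B₁ := R.topologicalClosure with hK
  have hRK : R ≤ K := Submodule.le_topologicalClosure R
  set e₀ : R →ₗ[ℂ] K := Submodule.inclusion hRK
  set e : R →L[ℂ] K := e₀.mkContinuous 1 (fun v => by rw [one_mul]; exact le_of_eq rfl)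
  have he_norm : ∀ v : R, ‖e v‖ = ‖v‖ := fun v => rfl
  have h_e : ∀ v : R, ‖v‖ ≤ ((1 : ℝ≥0) : ℝ) * ‖e v‖ := fun v => by
    rw [he_norm v, NNReal.coe_one, one_mul]
  have h_dense : DenseRange e := by
    intro y
    have hy : (y : B₁) ∈ closure (R : Set B₁) := by
      have := y.2
      rwa [hK, ← Submodule.topologicalClosure_coe] at *
    rw [mem_closure_iff_seq_limit] at hy
    obtain ⟨u, hu, hlim⟩ := hy
    rw [mem_closure_iff_seq_limit]
    refine ⟨fun n => e ⟨u n, hu n⟩, fun n => Set.mem_range_self _, ?_⟩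
    rw [tendsto_subtype_rng]
    exact hlim
  set W₀ : K →L[ℂ] B₂ :=
    g.extend e
  have hW₀norm : ‖W₀‖ ≤ 1 := by
    have := ContinuousLinearMap.opNorm_extend_le g h_dense h_e
    have hg : ‖g‖ ≤ 1 := g.opNorm_le_bound zero_le_one (fun v => by
      rw [show g v = g₀ v from rfl, hiso v, one_mul])
    calc ‖W₀‖ ≤ 1 * ‖g‖ := this
      _ ≤ 1 := by simpa using hg
  have : CompleteSpace K := (Submodule.isClosed_topologicalClosure R).completeSpace_coe
  set W : B₁ →L[ℂ] B₂ := W₀ ∘L (Submodule.orthogonalProjectionOnto K : B₁ →L[ℂ] K)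
  refine ⟨W, ?_, ?_⟩
  · calc ‖W‖ ≤ ‖W₀‖ * ‖(Submodule.orthogonalProjectionOnto K : B₁ →L[ℂ] K)‖ :=
        ContinuousLinearMap.opNorm_comp_le _ _
      _ ≤ 1 * 1 := mul_le_mul hW₀norm (Submodule.orthogonalProjectionOnto_norm_le K)
          (norm_nonneg (Submodule.orthogonalProjectionOnto K)) zero_le_one
      _ = 1 := one_mul 1
  · intro x
    have hmemR : S₁ x ∈ R := LinearMap.mem_range_self f₁ x
    have hmemK : S₁ x ∈ K := hRK hmemR
    have hproj : Submodule.orthogonalProjectionOnto K (S₁ x) = ⟨S₁ x, hmemK⟩ :=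
      Submodule.orthogonalProjectionOnto_mem_subspace_eq_self (⟨S₁ x, hmemK⟩ : K)
    have hee : e ⟨S₁ x, hmemR⟩ = ⟨S₁ x, hmemK⟩ := rfl
    calc W (S₁ x) = W₀ (Submodule.orthogonalProjectionOnto K (S₁ x)) := rfl
      _ = W₀ (e ⟨S₁ x, hmemR⟩) := by rw [hproj, hee]
      _ = g ⟨S₁ x, hmemR⟩ := ContinuousLinearMap.extend_eq _ h_dense (ContinuousLinearMap.isUniformEmbedding_of_bound e h_e).isUniformInducing _
      _ = S₂ x := hg₀ x

section DualAdjoint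

variable {A B : Type*}
    [NormedAddCommGroup A] [InnerProductSpace ℂ A] [CompleteSpace A]
    [NormedAddCommGroup B] [InnerProductSpace ℂ B] [CompleteSpace B]

theorem dualOp_toDual (T : A →L[ℂ] B) (v : B) :
    dualOp T (InnerProductSpace.toDual ℂ B v)
      = InnerProductSpace.toDual ℂ A (ContinuousLinearMap.adjoint T v) := by
  ext x
  simp [dualOp, ContinuousLinearMap.adjoint_inner_left, InnerProductSpace.toDual_apply_apply]

/-- The entropy numbers of the dual operator agree with those of the adjoint. -/
theorem entropyNumber_dualOp_eq_adjoint (k : ℕ) (T : A →L[ℂ] B) :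
    entropyNumber k (dualOp T) = entropyNumber k (ContinuousLinearMap.adjoint T) := by
  unfold entropyNumber
  congr 1
  ext ε
  simp only [Set.mem_setOf_eq]
  constructor
  · rintro ⟨hε, b, hcov⟩
    refine ⟨hε, fun j => (InnerProductSpace.toDual ℂ A).symm (b j), ?_⟩
    rintro y ⟨v, hv, rfl⟩
    have hv1 : ‖v‖ ≤ 1 := by simpa [Metric.mem_closedBall, dist_zero_right] using hv
    have hb : InnerProductSpace.toDual ℂ B v ∈ Metric.closedBall (0 : B →L[ℂ] ℂ) 1 := by
      simpa [Metric.mem_closedBall, dist_zero_right] using hv1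
    obtain ⟨j, hj⟩ := Set.mem_iUnion.1 (hcov ⟨_, hb, rfl⟩)
    refine Set.mem_iUnion.2 ⟨j, ?_⟩
    simp only [Metric.mem_closedBall] at hj ⊢
    calc dist (ContinuousLinearMap.adjoint T v) ((InnerProductSpace.toDual ℂ A).symm (b j))
        = dist (InnerProductSpace.toDual ℂ A (ContinuousLinearMap.adjoint T v)) (b j) := by
          rw [← (InnerProductSpace.toDual ℂ A).symm.dist_map,
            (InnerProductSpace.toDual ℂ A).symm_apply_apply]
      _ = dist (dualOp T (InnerProductSpace.toDual ℂ B v)) (b j) := by rw [dualOp_toDual]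
      _ ≤ ε := hj
  · rintro ⟨hε, b, hcov⟩
    refine ⟨hε, fun j => InnerProductSpace.toDual ℂ A (b j), ?_⟩
    rintro y ⟨g, hg, rfl⟩
    have hg1 : ‖g‖ ≤ 1 := by simpa [Metric.mem_closedBall, dist_zero_right] using hg
    set v : B := (InnerProductSpace.toDual ℂ B).symm g with hv
    have hv1 : v ∈ Metric.closedBall (0 : B) 1 := by
      simp only [Metric.mem_closedBall, dist_zero_right, hv,
        (InnerProductSpace.toDual ℂ B).symm.norm_map]
      exact hg1
    obtain ⟨j, hj⟩ := Set.mem_iUnion.1 (hcov ⟨v, hv1, rfl⟩)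
    refine Set.mem_iUnion.2 ⟨j, ?_⟩
    simp only [Metric.mem_closedBall] at hj ⊢
    have hgv : g = InnerProductSpace.toDual ℂ B v := by
      rw [hv, (InnerProductSpace.toDual ℂ B).apply_symm_apply]
    calc dist (dualOp T g) (InnerProductSpace.toDual ℂ A (b j))
        = dist (InnerProductSpace.toDual ℂ A (ContinuousLinearMap.adjoint T v))
            (InnerProductSpace.toDual ℂ A (b j)) := by rw [hgv, dualOp_toDual]
      _ = dist (ContinuousLinearMap.adjoint T v) (b j) :=
          (InnerProductSpace.toDual ℂ A).dist_map _ _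
      _ ≤ ε := hj

end DualAdjoint

theorem entropyNumber_dualOp_eq_of_hilbert {A B : Type*}
    [NormedAddCommGroup A] [InnerProductSpace ℂ A] [CompleteSpace A]
    [NormedAddCommGroup B] [InnerProductSpace ℂ B] [CompleteSpace B]
    (T : A →L[ℂ] B) (hT : IsCompactOperator (⇑T)) :
    ∀ k : ℕ, 1 ≤ k → entropyNumber k (dualOp T) = entropyNumber k T := by
  intro k _
  set T' : B →L[ℂ] A := ContinuousLinearMap.adjoint T with hT'
  have hpos : 0 ≤ T' ∘L T := by
    rw [ContinuousLinearMap.nonneg_iff_isPositive]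
    exact ContinuousLinearMap.isPositive_adjoint_comp_self T
  set P : A →L[ℂ] A := CFC.sqrt (T' ∘L T) with hP
  have hPpos : 0 ≤ P := CFC.sqrt_nonneg _
  have hPsa : ContinuousLinearMap.adjoint P = P := by
    have := ((ContinuousLinearMap.nonneg_iff_isPositive P).mp hPpos).isSelfAdjoint
    rwa [ContinuousLinearMap.isSelfAdjoint_iff'] at this
  have hPP : P ∘L P = T' ∘L T := by
    rw [← ContinuousLinearMap.mul_def]
    exact CFC.sqrt_mul_sqrt_self _ hpos
  have hnorm : ∀ x, ‖P x‖ = ‖T x‖ := by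
    intro x
    have l3 : P (P x) = T' (T x) := by
      have := congrArg (fun S : A →L[ℂ] A => S x) hPP
      simpa [ContinuousLinearMap.comp_apply] using this
    have l1 : ⟪P (P x), x⟫_ℂ = ⟪P x, P x⟫_ℂ := by
      have := ContinuousLinearMap.adjoint_inner_left P x (P x)
      rwa [hPsa] at this
    have l2 : ⟪T' (T x), x⟫_ℂ = ⟪T x, T x⟫_ℂ := by
      rw [hT']
      exact ContinuousLinearMap.adjoint_inner_left T x (T x)
    have h1 : ⟪P x, P x⟫_ℂ = ⟪T x, T x⟫_ℂ := by rw [← l1, l3, l2]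
    rw [norm_eq_sqrt_re_inner (𝕜 := ℂ) (P x), norm_eq_sqrt_re_inner (𝕜 := ℂ) (T x), h1]
  obtain ⟨U, hU, hUP⟩ := exists_contraction_factor P T hnorm
  obtain ⟨V, hV, hVT⟩ := exists_contraction_factor T P (fun x => (hnorm x).symm)
  have hUPc : U ∘L P = T := ContinuousLinearMap.ext fun x => hUP x
  have hVTc : V ∘L T = P := ContinuousLinearMap.ext fun x => hVT x
  have hUadj : ‖ContinuousLinearMap.adjoint U‖ ≤ 1 := by
    rw [LinearIsometryEquiv.norm_map]; exact hU
  have hVadj : ‖ContinuousLinearMap.adjoint V‖ ≤ 1 := by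
    rw [LinearIsometryEquiv.norm_map]; exact hV
  have hTfac : P ∘L ContinuousLinearMap.adjoint U = T' := by
    rw [hT', ← hUPc, ContinuousLinearMap.adjoint_comp, hPsa]
  have hPfac : T' ∘L ContinuousLinearMap.adjoint V = P := by
    rw [hT', ← hPsa, ← hVTc, ContinuousLinearMap.adjoint_comp]
  have e1 : entropyNumber k T ≤ entropyNumber k P := by
    rw [← hUPc]; exact entropyNumber_comp_left_le k U P hU
  have e2 : entropyNumber k P ≤ entropyNumber k T := by
    rw [← hVTc]; exact entropyNumber_comp_left_le k V T hV
  have e3 : entropyNumber k T' ≤ entropyNumber k P := by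
    rw [← hTfac]; exact entropyNumber_comp_right_le k P (ContinuousLinearMap.adjoint U) hUadj
  have e4 : entropyNumber k P ≤ entropyNumber k T' := by
    rw [← hPfac]; exact entropyNumber_comp_right_le k T' (ContinuousLinearMap.adjoint V) hVadj
  rw [entropyNumber_dualOp_eq_adjoint, ← hT']
  exact le_antisymm (le_trans e3 e2) (le_trans e1 e4)
end
end

section
/- (Carl's inequality) Let K : B → B be a compact linear operator on an infinite-dimensional complex Banach space B and let (λ_k(K))_{k≥1} be an eigenvalue sequence of K. Then |λ_k(K)| ≤ √2 · e_k(K) for every k ∈ ℕ, k ≥ 1. -/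
noncomputable section

/-- The algebraic multiplicity of `z` as an eigenvalue of `K`: the dimension of
`{b : B | (K - z·id)^m b = 0 for some m}`. -/
def algMult {B : Type*} [NormedAddCommGroup B] [NormedSpace ℂ B]
    (K : B →L[ℂ] B) (z : ℂ) : ℕ :=
  Module.finrank ℂ
    ↥(⨆ m : ℕ, LinearMap.ker (((K : B →ₗ[ℂ] B) - z • LinearMap.id) ^ m))

/-- `lam` (indexed from `1`; the value at `0` is irrelevant) is an eigenvalue sequence of
the compact operator `K`: the moduli are nonincreasing, every nonzero term is an
eigenvalue of `K`, and every nonzero eigenvalue `z` of `K` occurs in the sequence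
exactly as many times as its (finite) algebraic multiplicity. -/
def IsEigenvalueSequence {B : Type*} [NormedAddCommGroup B] [NormedSpace ℂ B]
    (K : B →L[ℂ] B) (lam : ℕ → ℂ) : Prop :=
  (∀ k : ℕ, 1 ≤ k → ‖lam (k + 1)‖ ≤ ‖lam k‖) ∧
  (∀ k : ℕ, 1 ≤ k → lam k ≠ 0 → ∃ b : B, b ≠ 0 ∧ K b = lam k • b) ∧
  (∀ z : ℂ, z ≠ 0 → (∃ b : B, b ≠ 0 ∧ K b = z • b) →
    {k : ℕ | 1 ≤ k ∧ lam k = z}.Finite ∧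
      Nat.card {k : ℕ | 1 ≤ k ∧ lam k = z} = algMult K z)

open Module Submodule Set MeasureTheory Metric
open scoped ENNReal

section carl_aux

variable {B : Type*} [NormedAddCommGroup B] [NormedSpace ℂ B]

/-- The supremum of iterated kernels equals the maximal generalized eigenspace. -/
lemma carl_aux_G_eq (K : B →L[ℂ] B) (z : ℂ) :
    (⨆ m : ℕ, LinearMap.ker (((K : B →ₗ[ℂ] B) - z • LinearMap.id) ^ m)) =
      Module.End.maxGenEigenspace (K : B →ₗ[ℂ] B) z := by
  rw [← Module.End.iSup_genEigenspace_eq]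
  refine iSup_congr fun m => ?_
  rw [Module.End.genEigenspace_nat]
  rfl

/-- Chain of generalized eigenvectors inside the maximal generalized eigenspace. -/
lemma carl_exists_chain (f : Module.End ℂ B) (z : ℂ)
    [FiniteDimensional ℂ ↥(f.maxGenEigenspace z)] (d : ℕ) :
    d ≤ finrank ℂ ↥(f.maxGenEigenspace z) →
    ∃ u : ℕ → B, (∀ s < d, u s ∈ f.maxGenEigenspace z) ∧
      LinearIndependent ℂ (fun s : Fin d => u s) ∧
      ∀ s < d, f (u s) - z • u s ∈ span ℂ (u '' {s' | s' < s}) := by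
  induction d with
  | zero =>
    intro _
    exact ⟨fun _ => 0, fun s hs => absurd hs (Nat.not_lt_zero s),
      linearIndependent_empty_type, fun s hs => absurd hs (Nat.not_lt_zero s)⟩
  | succ d ih =>
    intro hd1
    classical
    obtain ⟨u, hmem, hli, hspan⟩ := ih (le_trans (Nat.le_succ d) hd1)
    set G := f.maxGenEigenspace z with hG
    set W := span ℂ (u '' {s' | s' < d}) with hW
    have hrange : Set.range (fun s : Fin d => u s) = u '' {s' | s' < d} := by
      ext x
      constructor
      · rintro ⟨s, rfl⟩; exact ⟨s.1, s.isLt, rfl⟩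
      · rintro ⟨s', hs', rfl⟩; exact ⟨⟨s', hs'⟩, rfl⟩
    have hWG : W ≤ G := by
      rw [hW, span_le]
      rintro x ⟨s', hs', rfl⟩
      exact hmem s' hs'
    have hWfd : FiniteDimensional ℂ ↥W :=
      FiniteDimensional.span_of_finite ℂ ((Set.finite_Iio d).image u)
    have hWrank : finrank ℂ ↥W = d := by
      have h1 := finrank_span_eq_card hli
      rw [hrange] at h1
      rw [hW, h1, Fintype.card_fin]
    -- there is a vector in `G` outside `W`
    obtain ⟨x, hxG, hxW⟩ : ∃ x ∈ G, x ∉ W := by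
      by_contra hcon
      push_neg at hcon
      have hGW : G ≤ W := fun x hx => hcon x hx
      have := Submodule.finrank_mono hGW
      omega
    have hex : ∃ m : ℕ, ((f - z • 1) ^ m) x ∈ W := by
      obtain ⟨m, hm⟩ := (Module.End.mem_maxGenEigenspace f z x).mp hxG
      exact ⟨m, by rw [hm]; exact zero_mem W⟩
    set m := Nat.find hex with hmdef
    have hm : ((f - z • 1) ^ m) x ∈ W := Nat.find_spec hex
    have hm0 : m ≠ 0 := by
      intro h
      rw [h, pow_zero] at hm
      exact hxW hm
    set v := ((f - z • 1) ^ (m - 1)) x with hv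
    have hvW : v ∉ W := Nat.find_min hex (Nat.sub_lt (Nat.pos_of_ne_zero hm0) one_pos)
    have hvG : v ∈ G := by
      have hcomm : Commute f ((f - z • 1) ^ (m - 1)) :=
        (Commute.sub_right (Commute.refl f) ((Commute.one_right f).smul_right z)).pow_right _
      exact Module.End.mapsTo_maxGenEigenspace_of_comm hcomm z hxG
    have hfv : f v - z • v ∈ W := by
      have h1 : f v - z • v = ((f - z • 1) ^ m) x := by
        have h2 : ((f - z • 1) ^ m) x = (f - z • 1) (((f - z • 1) ^ (m - 1)) x) := by
          conv_lhs => rw [← Nat.succ_pred_eq_of_pos (Nat.pos_of_ne_zero hm0)]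
          rw [pow_succ']
          rfl
        rw [h2, ← hv]
        simp [LinearMap.sub_apply, LinearMap.smul_apply, Module.End.one_apply]
      rw [h1]; exact hm
    refine ⟨Function.update u d v, ?_, ?_, ?_⟩
    · intro s hs
      rcases Nat.lt_succ_iff_lt_or_eq.mp hs with h | h
      · rw [Function.update_of_ne (Nat.ne_of_lt h)]
        exact hmem s h
      · rw [h, Function.update_self]
        exact hvG
    · have heq : (fun s : Fin (d + 1) => Function.update u d v s) =
          Fin.snoc (fun s : Fin d => u s) v := by
        funext s
        refine Fin.lastCases ?_ (fun i => ?_) s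
        · simp [Fin.snoc_last, Fin.val_last, Function.update_self]
        · simp only [Fin.snoc_castSucc, Fin.coe_castSucc]
          rw [Function.update_of_ne (Nat.ne_of_lt i.isLt)]
      rw [heq]
      refine linearIndependent_fin_snoc.mpr ⟨hli, ?_⟩
      rwa [hrange]
    · intro s hs
      have himg : ∀ s' ≤ d, Function.update u d v '' {i | i < s'} = u '' {i | i < s'} := by
        intro s' hs'
        apply Set.image_congr
        intro i hi
        exact Function.update_of_ne (Nat.ne_of_lt (lt_of_lt_of_le hi hs')) _ _
      rcases Nat.lt_succ_iff_lt_or_eq.mp hs with h | h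
      · rw [Function.update_of_ne (Nat.ne_of_lt h), himg s (le_of_lt h)]
        exact hspan s h
      · subst h
        rw [Function.update_self, himg s le_rfl]
        exact hfv

/-- Determinant of the real restriction of a complex endomorphism that is
upper-triangular with respect to a basis. -/
lemma carl_det {E : Type*} [NormedAddCommGroup E] [NormedSpace ℂ E] {k : ℕ}
    (b : Basis (Fin k) ℂ E) (F : E →ₗ[ℂ] E) (ζ : Fin k → ℂ)
    (hF : ∀ j, F (b j) - ζ j • b j ∈ span ℂ (⇑b '' {i | i < j})) :
    finrank ℝ E = 2 * k ∧ LinearMap.det (F.restrictScalars ℝ) = ∏ j, ‖ζ j‖ ^ 2 := by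
  classical
  set w : Basis (Fin 2 × Fin k) ℝ E := Complex.basisOneI.smulTower b with hwdef
  have hrank : finrank ℝ E = 2 * k := by
    rw [finrank_eq_card_basis w, Fintype.card_prod, Fintype.card_fin, Fintype.card_fin]
  have hw : ∀ (i : Fin 2) (j : Fin k), w (i, j) = Complex.basisOneI i • b j := fun i j =>
    Basis.smulTower_apply _ _ _
  have hkey : ∀ (c : ℂ) (j : Fin k), c • b j = c.re • w (0, j) + c.im • w (1, j) := by
    intro c j
    have h1 : w (0, j) = (1 : ℂ) • b j := by rw [hw, Complex.coe_basisOneI]; simp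
    have h2 : w (1, j) = Complex.I • b j := by rw [hw, Complex.coe_basisOneI]; simp
    rw [h1, h2, ← smul_assoc, ← smul_assoc, ← add_smul]
    congr 1
    simp [Complex.real_smul, Complex.re_add_im]
  have hsmulspan : ∀ (s : Set (Fin k)) (x : E), x ∈ span ℂ (⇑b '' s) → ∀ c : ℂ,
      c • x ∈ span ℝ (⇑w '' (Set.univ ×ˢ s)) := by
    intro s x hx
    induction hx using Submodule.span_induction with
    | mem x hxs =>
      obtain ⟨j, hj, rfl⟩ := hxs
      intro c
      rw [hkey c j]
      refine add_mem (smul_mem _ _ (subset_span ⟨(0, j), ⟨Set.mem_univ _, hj⟩, rfl⟩))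
        (smul_mem _ _ (subset_span ⟨(1, j), ⟨Set.mem_univ _, hj⟩, rfl⟩))
    | zero => intro c; rw [smul_zero]; exact zero_mem _
    | add x y hx hy ihx ihy => intro c; rw [smul_add]; exact add_mem (ihx c) (ihy c)
    | smul a x hx ih => intro c; rw [smul_smul]; exact ih (c * a)
  have hreprzero : ∀ (S : Set (Fin 2 × Fin k)) (x : E), x ∈ span ℝ (⇑w '' S) →
      ∀ r ∉ S, w.repr x r = 0 := by
    intro S x hx
    induction hx using Submodule.span_induction with
    | mem x hxS =>
      obtain ⟨r', hr', rfl⟩ := hxS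
      intro r hr
      rw [Basis.repr_self, Finsupp.single_apply_eq_zero]
      intro h
      exact absurd (h ▸ hr') hr
    | zero => intro r _; simp
    | add x y hx hy ihx ihy => intro r hr; rw [map_add]; simp [ihx r hr, ihy r hr]
    | smul a x hx ih => intro r hr; rw [_root_.map_smul]; simp [ih r hr]
  set A := LinearMap.toMatrix w w (F.restrictScalars ℝ) with hA
  have hdecomp : ∀ (i : Fin 2) (j : Fin k), F (w (i, j)) =
      (Complex.basisOneI i * ζ j) • b j + Complex.basisOneI i • (F (b j) - ζ j • b j) := by
    intro i j
    rw [hw, _root_.map_smul, smul_sub, smul_smul, add_sub_cancel]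
  have hY : ∀ (i : Fin 2) (j : Fin k),
      Complex.basisOneI i • (F (b j) - ζ j • b j) ∈ span ℝ (⇑w '' (Set.univ ×ˢ {i' | i' < j})) :=
    fun i j => hsmulspan _ _ (hF j) _
  have hentry : ∀ (i i' : Fin 2) (j j' : Fin k), ¬ (j' < j) → A (i', j') (i, j) =
      (if j' = j then (if i' = 0 then (Complex.basisOneI i * ζ j).re
        else (Complex.basisOneI i * ζ j).im) else 0) := by
    intro i i' j j' hj'
    rw [hA, LinearMap.toMatrix_apply, LinearMap.coe_restrictScalars, hdecomp, map_add]
    have hYr : w.repr (Complex.basisOneI i • (F (b j) - ζ j • b j)) (i', j') = 0 := by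
      refine hreprzero _ _ (hY i j) (i', j') ?_
      rintro ⟨-, h⟩
      exact hj' h
    rw [Finsupp.add_apply, hYr, add_zero, hkey, map_add, _root_.map_smul, _root_.map_smul,
      Basis.repr_self, Basis.repr_self, Finsupp.add_apply, Finsupp.smul_apply,
      Finsupp.smul_apply, Finsupp.single_apply, Finsupp.single_apply]
    by_cases h : j' = j
    · subst h
      fin_cases i' <;> simp
    · rw [if_neg (fun heq => h (congrArg Prod.snd heq).symm),
        if_neg (fun heq => h (congrArg Prod.snd heq).symm), if_neg h]
      simp
  have htri : A.BlockTriangular Prod.snd := by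
    rintro ⟨i', j'⟩ ⟨i, j⟩ h
    rw [hentry i i' j j' (asymm h), if_neg (fun hq => absurd (hq ▸ h) (lt_irrefl _))]
  have hdet : A.det = ∏ j : Fin k, ‖ζ j‖ ^ 2 := by
    rw [htri.det]
    have himg : Finset.univ.image (Prod.snd : Fin 2 × Fin k → Fin k) = Finset.univ :=
      Finset.eq_univ_of_forall fun j => Finset.mem_image.mpr ⟨(0, j), Finset.mem_univ _, rfl⟩
    rw [himg]
    refine Finset.prod_congr rfl fun j _ => ?_
    let e : Fin 2 ≃ {r : Fin 2 × Fin k // r.snd = j} :=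
      { toFun := fun i => ⟨(i, j), rfl⟩
        invFun := fun r => r.1.1
        left_inv := fun i => rfl
        right_inv := by rintro ⟨⟨a, c⟩, (h : c = j)⟩; subst h; rfl }
    rw [← Matrix.det_submatrix_equiv_self e, Matrix.det_fin_two]
    have hAe : ∀ i' i : Fin 2, ((A.toSquareBlock Prod.snd j).submatrix e e) i' i =
        (if i' = 0 then (Complex.basisOneI i * ζ j).re else (Complex.basisOneI i * ζ j).im) := by
      intro i' i
      show A (i', j) (i, j) = _
      rw [hentry i i' j j (lt_irrefl j), if_pos rfl]
    rw [hAe, hAe, hAe, hAe]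
    have hn : ‖ζ j‖ ^ 2 = (ζ j).re * (ζ j).re + (ζ j).im * (ζ j).im := by
      rw [Complex.sq_norm, Complex.normSq_apply]
    rw [hn]
    norm_num [Complex.coe_basisOneI, Complex.mul_re, Complex.mul_im]
  exact ⟨hrank, by rw [← LinearMap.det_toMatrix w, ← hA, hdet]⟩

/-- Existence of a `k`-dimensional invariant subspace on which the determinant is the
product of the first `k` eigenvalue moduli (squared, over `ℝ`). -/
lemma carl_exists_subspace (K : B →L[ℂ] B) (lam : ℕ → ℂ) (k : ℕ)
    (Hfd : ∀ j < k, FiniteDimensional ℂ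
      ↥(Module.End.maxGenEigenspace (K : B →ₗ[ℂ] B) (lam (j + 1))))
    (Hcard : ∀ j < k, ∀ s : Finset ℕ, (∀ i ∈ s, i < k ∧ lam (i + 1) = lam (j + 1)) →
      s.card ≤ finrank ℂ ↥(Module.End.maxGenEigenspace (K : B →ₗ[ℂ] B) (lam (j + 1)))) :
    ∃ (M : Submodule ℂ B) (hM : ∀ x ∈ M, (K : B →ₗ[ℂ] B) x ∈ M),
      FiniteDimensional ℂ ↥M ∧ finrank ℂ ↥M = k ∧ finrank ℝ ↥M = 2 * k ∧
      LinearMap.det (((K : B →ₗ[ℂ] B).restrict hM).restrictScalars ℝ) =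
        ∏ j ∈ Finset.range k, ‖lam (j + 1)‖ ^ 2 := by
  classical
  set g : Module.End ℂ B := (K : B →ₗ[ℂ] B) with hg
  set G : ℂ → Submodule ℂ B := fun z => Module.End.maxGenEigenspace g z with hGdef
  set T : ℂ → ℕ → ℕ := fun z j => ((Finset.range j).filter (fun i => lam (i + 1) = z)).card
    with hTdef
  set d : ℂ → ℕ := fun z => T z k with hddef
  set t : ℕ → ℕ := fun j => T (lam (j + 1)) j with htdef
  -- counting facts
  have hTmono : ∀ z i j, i ≤ j → T z i ≤ T z j := fun z i j hij =>
    Finset.card_le_card (Finset.filter_subset_filter _ (Finset.range_subset_range.mpr hij))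
  have hTsucc : ∀ z j, lam (j + 1) = z → T z (j + 1) = T z j + 1 := by
    intro z j hPz
    rw [hTdef]
    simp only [Finset.range_add_one, Finset.filter_insert, if_pos hPz]
    rw [Finset.card_insert_of_notMem (by simp)]
  have hTsucc' : ∀ z j, lam (j + 1) ≠ z → T z (j + 1) = T z j := by
    intro z j hPz
    rw [hTdef]
    simp only [Finset.range_add_one, Finset.filter_insert, if_neg hPz]
  have hTstrict : ∀ z i j, i < j → lam (i + 1) = z → T z i < T z j := by
    intro z i j hij hPz
    have h1 := hTsucc z i hPz
    have h2 := hTmono z (i + 1) j hij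
    omega
  have hocc : ∀ z j s, s < T z j → ∃ i, i < j ∧ lam (i + 1) = z ∧ T z i = s := by
    intro z j
    induction j with
    | zero => intro s hs; simp [hTdef] at hs
    | succ j ih =>
      intro s hs
      by_cases hPz : lam (j + 1) = z
      · rw [hTsucc z j hPz] at hs
        rcases Nat.lt_succ_iff_lt_or_eq.mp hs with h | h
        · obtain ⟨i, h1, h2, h3⟩ := ih s h
          exact ⟨i, lt_trans h1 (Nat.lt_succ_self j), h2, h3⟩
        · exact ⟨j, Nat.lt_succ_self j, hPz, h.symm⟩
      · rw [hTsucc' z j hPz] at hs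
        obtain ⟨i, h1, h2, h3⟩ := ih s hs
        exact ⟨i, lt_trans h1 (Nat.lt_succ_self j), h2, h3⟩
  have htd : ∀ j, j < k → t j < d (lam (j + 1)) := fun j hj => hTstrict _ j k hj rfl
  -- choose chains
  have hchain : ∀ z : ℂ, ∃ u : ℕ → B,
      (∃ j, j < k ∧ lam (j + 1) = z) →
        (∀ s < d z, u s ∈ G z) ∧ LinearIndependent ℂ (fun s : Fin (d z) => u s) ∧
        ∀ s < d z, g (u s) - z • u s ∈ span ℂ (u '' {s' | s' < s}) := by
    intro z
    by_cases hz : ∃ j, j < k ∧ lam (j + 1) = z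
    · obtain ⟨j, hj, hzj⟩ := hz
      subst hzj
      haveI := Hfd j hj
      have hd' : d (lam (j + 1)) ≤ finrank ℂ ↥(G (lam (j + 1))) := by
        refine Hcard j hj _ fun i hi => ?_
        simp only [hTdef, Finset.mem_filter, Finset.mem_range] at hi
        exact hi
      obtain ⟨u, h1, h2, h3⟩ := carl_exists_chain g (lam (j + 1)) (d (lam (j + 1))) hd'
      exact ⟨u, fun _ => ⟨h1, h2, h3⟩⟩
    · exact ⟨fun _ => 0, fun h => absurd h hz⟩
  choose u hu using hchain
  set v : ℕ → B := fun j => u (lam (j + 1)) (t j) with hvdef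
  -- image of earlier chain vectors
  have himg : ∀ j, j < k → u (lam (j + 1)) '' {s' | s' < t j} ⊆ v '' {i | i < j} := by
    rintro j hj x ⟨s', hs', rfl⟩
    obtain ⟨i, hij, hPi, hTi⟩ := hocc (lam (j + 1)) j s' hs'
    refine ⟨i, hij, ?_⟩
    rw [hvdef]
    simp only
    rw [htdef]
    simp only
    rw [hPi, hTi]
  have hvspan : ∀ j, j < k → g (v j) - lam (j + 1) • v j ∈ span ℂ (v '' {i | i < j}) := by
    intro j hj
    have h := (hu (lam (j + 1)) ⟨j, hj, rfl⟩).2.2 (t j) (htd j hj)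
    exact span_mono (himg j hj) h
  have hvmem : ∀ j, j < k → v j ∈ G (lam (j + 1)) := fun j hj =>
    (hu (lam (j + 1)) ⟨j, hj, rfl⟩).1 (t j) (htd j hj)
  -- per-eigenvalue non-membership
  have hunot : ∀ j, j < k → v j ∉ span ℂ (u (lam (j + 1)) '' {s' | s' < t j}) := by
    intro j hj
    have hli := (hu (lam (j + 1)) ⟨j, hj, rfl⟩).2.1
    have h := hli.notMem_span_image (s := {s : Fin (d (lam (j + 1))) | (s : ℕ) < t j})
      (x := ⟨t j, htd j hj⟩) (by simp)
    have heq : (fun s : Fin (d (lam (j + 1))) => u (lam (j + 1)) s) ''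
        {s : Fin (d (lam (j + 1))) | (s : ℕ) < t j} = u (lam (j + 1)) '' {s' | s' < t j} := by
      ext x
      constructor
      · rintro ⟨s, hs, rfl⟩; exact ⟨s, hs, rfl⟩
      · rintro ⟨s', hs', rfl⟩
        exact ⟨⟨s', lt_trans hs' (htd j hj)⟩, hs', rfl⟩
    rw [heq] at h
    exact h
  -- global non-membership
  have hnot : ∀ j, j < k → v j ∉ span ℂ (v '' {i | i < j}) := by
    intro j hj hmem
    set z := lam (j + 1) with hz
    set W := span ℂ (u z '' {s' | s' < t j}) with hW
    set C := ⨆ (z' : ℂ) (_ : z' ≠ z), G z' with hC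
    have hWG : W ≤ G z := by
      rw [hW, span_le]
      rintro x ⟨s', hs', rfl⟩
      exact (hu z ⟨j, hj, rfl⟩).1 s' (lt_trans hs' (htd j hj))
    have hsub : span ℂ (v '' {i | i < j}) ≤ W ⊔ C := by
      rw [span_le]
      rintro x ⟨i, hi, rfl⟩
      by_cases hzi : lam (i + 1) = z
      · apply le_sup_left (α := Submodule ℂ B)
        apply subset_span
        have : v i = u z (t i) := by
          rw [hvdef]; simp only; rw [htdef]; simp only; rw [hzi]
        rw [this]
        have h2 : t i < t j := by
          rw [htdef]; simp only; rw [hzi]; exact hTstrict z i j hi hzi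
        exact ⟨t i, h2, rfl⟩
      · apply le_sup_right (α := Submodule ℂ B)
        have h1 : G (lam (i + 1)) ≤ C := by
          rw [hC]
          exact le_iSup_of_le (lam (i + 1)) (le_iSup_of_le hzi le_rfl)
        exact h1 (hvmem i (lt_trans hi hj))
    obtain ⟨w, hw, c, hc, hsum⟩ := Submodule.mem_sup.mp (hsub hmem)
    have hcG : c ∈ G z := by
      have : c = v j - w := by rw [← hsum]; abel
      rw [this]
      exact Submodule.sub_mem _ (hvmem j hj) (hWG hw)
    have hdisj : Disjoint (G z) C := by
      rw [hC]
      have := (Module.End.independent_maxGenEigenspace g) z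
      simpa [hGdef] using this
    have hc0 : c = 0 := Submodule.disjoint_def.mp hdisj c hcG hc
    rw [hc0, add_zero] at hsum
    exact hunot j hj (hsum ▸ hw)
  -- linear independence
  have hind : ∀ j, j ≤ k → LinearIndependent ℂ (fun i : Fin j => v i) := by
    intro j
    induction j with
    | zero => intro _; exact linearIndependent_empty_type
    | succ j ih =>
      intro hj1
      have hj : j < k := hj1
      have heq : (fun i : Fin (j + 1) => v i) =
          Fin.snoc (fun i : Fin j => v i) (v j) := by
        funext i
        refine Fin.lastCases ?_ (fun i => ?_) i
        · simp [Fin.snoc_last]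
        · simp [Fin.snoc_castSucc]
      rw [heq]
      refine linearIndependent_fin_snoc.mpr ⟨ih (le_of_lt hj1), ?_⟩
      have hr : Set.range (fun i : Fin j => v i) = v '' {i | i < j} := by
        ext x
        constructor
        · rintro ⟨i, rfl⟩; exact ⟨i, i.isLt, rfl⟩
        · rintro ⟨i, hi, rfl⟩; exact ⟨⟨i, hi⟩, rfl⟩
      rw [hr]
      exact hnot j hj
  have hli : LinearIndependent ℂ (fun i : Fin k => v i) := hind k le_rfl
  set M : Submodule ℂ B := span ℂ (Set.range (fun i : Fin k => v i)) with hM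
  have hMinv : ∀ x ∈ M, g x ∈ M := by
    intro x hx
    induction hx using Submodule.span_induction with
    | mem x hxr =>
      obtain ⟨i, rfl⟩ := hxr
      have h1 : g (v i) = (g (v i) - lam (i.1 + 1) • v i) + lam (i.1 + 1) • v i := by abel
      rw [h1]
      refine add_mem ?_ (smul_mem _ _ (subset_span ⟨i, rfl⟩))
      have h2 : v '' {i' | i' < (i : ℕ)} ⊆ Set.range (fun i : Fin k => v i) := by
        rintro x ⟨i', hi', rfl⟩
        exact ⟨⟨i', lt_trans hi' i.isLt⟩, rfl⟩
      exact span_mono h2 |>.trans (span_le.mpr subset_span) (hvspan i.1 i.isLt)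
    | zero => rw [map_zero]; exact zero_mem M
    | add x y hx hy ihx ihy => rw [map_add]; exact add_mem ihx ihy
    | smul a x hx ih => rw [_root_.map_smul]; exact smul_mem _ _ ih
  haveI hMfd : FiniteDimensional ℂ ↥M := FiniteDimensional.span_of_finite ℂ (Set.finite_range _)
  have hfr : finrank ℂ ↥M = k := by
    rw [hM, finrank_span_eq_card hli, Fintype.card_fin]
  let b : Basis (Fin k) ℂ ↥M := Basis.span hli
  let F : ↥M →ₗ[ℂ] ↥M := g.restrict hMinv
  have hsubty : ∀ (s : Set (Fin k)) (y : ↥M),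
      (y : B) ∈ span ℂ ((fun i : Fin k => v i) '' s) → y ∈ span ℂ (⇑b '' s) := by
    intro s y hy
    have himg2 : (fun i : Fin k => v i) '' s = M.subtype '' (⇑b '' s) := by
      rw [Set.image_image]
      exact (Set.image_congr fun i _ => congrArg Subtype.val (Basis.span_apply hli i)).symm
    rw [himg2, Submodule.span_image] at hy
    obtain ⟨y', hy', heq⟩ := Submodule.mem_map.mp hy
    rwa [show y' = y from Subtype.ext heq] at hy'
  have hFtri : ∀ j : Fin k, F (b j) - (lam (j.1 + 1)) • b j ∈ span ℂ (⇑b '' {i | i < j}) := by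
    intro j
    apply hsubty
    have hbj : ((b j : ↥M) : B) = v j := congrArg Subtype.val (Basis.span_apply hli j)
    have hcoe : ((F (b j) - lam (j.1 + 1) • b j : ↥M) : B) =
        g (v j) - lam (j.1 + 1) • v j := by
      rw [Submodule.coe_sub, Submodule.coe_smul, hbj]
      congr 1
      rw [LinearMap.restrict_apply]
      simp [hbj]
    rw [hcoe]
    have h := hvspan j.1 j.isLt
    have hseteq : v '' {i : ℕ | i < (j : ℕ)} = (fun i : Fin k => v i) '' {i : Fin k | i < j} := by
      ext x
      constructor
      · rintro ⟨i, hi, rfl⟩; exact ⟨⟨i, lt_trans hi j.isLt⟩, hi, rfl⟩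
      · rintro ⟨i, hi, rfl⟩; exact ⟨i.1, hi, rfl⟩
    rwa [hseteq] at h
  obtain ⟨hr2, hdet⟩ := carl_det b F (fun j => lam (j.1 + 1)) hFtri
  refine ⟨M, hMinv, hMfd, hfr, hr2, ?_⟩
  rw [hdet, Fin.prod_univ_eq_prod_range (fun j => ‖lam (j + 1)‖ ^ 2) k]

/-- Volume comparison: if the image of the unit ball under `g` is covered by
finitely many balls of radius `r`, the determinant of `g` is bounded. -/
lemma carl_det_le_of_cover {E : Type*} [NormedAddCommGroup E] [NormedSpace ℝ E]
    [FiniteDimensional ℝ E] [Nontrivial E] (g : E →ₗ[ℝ] E) {ι : Type*} [Fintype ι]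
    (c : ι → E) {r : ℝ} (hr : 0 ≤ r)
    (hcov : ⇑g '' closedBall 0 1 ⊆ ⋃ i, closedBall (c i) r) :
    |LinearMap.det g| ≤ (Fintype.card ι : ℝ) * r ^ finrank ℝ E := by
  borelize E
  set μ := (finBasis ℝ E).addHaar with hμ
  have h1 : μ (⇑g '' closedBall 0 1) = ENNReal.ofReal |LinearMap.det g| * μ (closedBall 0 1) :=
    μ.addHaar_image_linearMap g _
  have h2 : μ (closedBall (0 : E) 1) = μ (ball (0 : E) 1) :=
    μ.addHaar_closedBall_eq_addHaar_ball 0 1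
  have h3 : μ (⇑g '' closedBall 0 1) ≤ (Fintype.card ι : ℝ≥0∞) *
      (ENNReal.ofReal (r ^ finrank ℝ E) * μ (ball 0 1)) := by
    calc μ (⇑g '' closedBall 0 1) ≤ μ (⋃ i, closedBall (c i) r) := measure_mono hcov
    _ ≤ ∑ i : ι, μ (closedBall (c i) r) := by
        have h := measure_biUnion_finset_le (μ := μ) (Finset.univ : Finset ι)
          (fun i => closedBall (c i) r)
        simpa using h
    _ = ∑ _i : ι, ENNReal.ofReal (r ^ finrank ℝ E) * μ (ball 0 1) := by
        refine Finset.sum_congr rfl fun i _ => μ.addHaar_closedBall (c i) hr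
    _ = (Fintype.card ι : ℝ≥0∞) * (ENNReal.ofReal (r ^ finrank ℝ E) * μ (ball 0 1)) := by
        rw [Finset.sum_const, Finset.card_univ, nsmul_eq_mul]
  rw [h1, h2] at h3
  have hb0 : μ (ball (0 : E) 1) ≠ 0 := (Metric.measure_ball_pos μ 0 one_pos).ne'
  have hbt : μ (ball (0 : E) 1) ≠ ⊤ := measure_ball_lt_top.ne
  rw [← mul_assoc] at h3
  have h4 : ENNReal.ofReal |LinearMap.det g| ≤
      (Fintype.card ι : ℝ≥0∞) * ENNReal.ofReal (r ^ finrank ℝ E) :=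
    (ENNReal.mul_le_mul_iff_left hb0 hbt).mp h3
  have h5 : (Fintype.card ι : ℝ≥0∞) * ENNReal.ofReal (r ^ finrank ℝ E) =
      ENNReal.ofReal ((Fintype.card ι : ℝ) * r ^ finrank ℝ E) := by
    rw [ENNReal.ofReal_mul (by positivity), ENNReal.ofReal_natCast]
  rw [h5] at h4
  exact (ENNReal.ofReal_le_ofReal_iff (by positivity)).mp h4

variable {B : Type*} [NormedAddCommGroup B] [NormedSpace ℂ B]

/-- Iterated covering: if `K (U)` is covered by `N` balls of radius `ε`, then
`K^[m] (U)` is covered by `N^m` balls of radius `ε^m`. -/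
lemma carl_cover_iterate (K : B →L[ℂ] B) {N : ℕ} (b : Fin N → B) {ε : ℝ} (hε : 0 < ε)
    (hcov : ⇑K '' closedBall 0 1 ⊆ ⋃ j, closedBall (b j) ε) (m : ℕ) :
    ∃ c : (Fin m → Fin N) → B,
      (⇑K)^[m] '' closedBall 0 1 ⊆ ⋃ t, closedBall (c t) (ε ^ m) := by
  induction m with
  | zero =>
    refine ⟨fun _ => 0, ?_⟩
    rintro y ⟨x, hx, rfl⟩
    rw [Function.iterate_zero_apply]
    exact Set.mem_iUnion.mpr ⟨fun i => i.elim0, by simpa using hx⟩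
  | succ m ih =>
    obtain ⟨c, hc⟩ := ih
    refine ⟨fun t => K (c (Fin.init t)) + ε ^ m • b (t (Fin.last m)), ?_⟩
    rintro y ⟨x, hx, rfl⟩
    have h1 : (⇑K)^[m] x ∈ ⋃ t, closedBall (c t) (ε ^ m) := hc ⟨x, hx, rfl⟩
    obtain ⟨t, ht⟩ := Set.mem_iUnion.mp h1
    rw [mem_closedBall, dist_eq_norm] at ht
    have hεm : (0 : ℝ) < ε ^ m := pow_pos hε m
    set u : B := (ε ^ m)⁻¹ • ((⇑K)^[m] x - c t) with hu
    have hu1 : u ∈ closedBall (0 : B) 1 := by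
      rw [mem_closedBall, dist_zero_right, hu, norm_smul, norm_inv, Real.norm_of_nonneg hεm.le]
      rw [inv_mul_le_iff₀ hεm, mul_one]
      exact ht
    have h2 : K u ∈ ⋃ j, closedBall (b j) ε := hcov ⟨u, hu1, rfl⟩
    obtain ⟨j, hj⟩ := Set.mem_iUnion.mp h2
    rw [mem_closedBall, dist_eq_norm] at hj
    refine Set.mem_iUnion.mpr ⟨Fin.snoc t j, ?_⟩
    rw [mem_closedBall, dist_eq_norm]
    simp only [Fin.init_snoc, Fin.snoc_last]
    have h3 : (⇑K)^[m + 1] x - (K (c t) + ε ^ m • b j) = ε ^ m • (K u - b j) := by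
      rw [Function.iterate_succ_apply', smul_sub]
      have h4 : K ((⇑K)^[m] x) - K (c t) = K ((⇑K)^[m] x - c t) := by
        rw [map_sub]
      have h5 : ε ^ m • K u = K ((⇑K)^[m] x - c t) := by
        rw [hu, ContinuousLinearMap.map_smul_of_tower, smul_smul, mul_inv_cancel₀ hεm.ne', one_smul]
      rw [h5, ← h4]
      abel
    rw [h3, norm_smul, Real.norm_of_nonneg hεm.le, pow_succ]
    exact mul_le_mul_of_nonneg_left hj hεm.le

end carl_aux

/-- Carl's inequality. -/
theorem carl_inequality {B : Type*} [NormedAddCommGroup B] [NormedSpace ℂ B]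
    [CompleteSpace B] (hB : ¬ FiniteDimensional ℂ B)
    (K : B →L[ℂ] B) (hK : IsCompactOperator (⇑K))
    (lam : ℕ → ℂ) (hlam : IsEigenvalueSequence K lam)
    (k : ℕ) (hk : 1 ≤ k) :
    ‖lam k‖ ≤ Real.sqrt 2 * entropyNumber k K := by
  obtain ⟨hmono0, heig, hmult⟩ := hlam
  by_cases hzero : lam k = 0
  · rw [hzero, norm_zero]
    have h1 : 0 ≤ entropyNumber k K := Real.sInf_nonneg (fun ε hε => hε.1.le)
    exact mul_nonneg (Real.sqrt_nonneg 2) h1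
  have hnorm : ∀ i j : ℕ, 1 ≤ i → i ≤ j → ‖lam j‖ ≤ ‖lam i‖ := by
    intro i j hi hij
    refine Nat.le_induction le_rfl (fun j hj ih => le_trans (hmono0 j (le_trans hi hj)) ih) j hij
  have hpos : 0 < ‖lam k‖ := norm_pos_iff.mpr hzero
  -- main claim: every admissible covering radius bounds the eigenvalue
  have hkey : ∀ ε : ℝ, 0 < ε →
      (∃ b : Fin (2 ^ (k - 1)) → B,
        ⇑K '' Metric.closedBall 0 1 ⊆ ⋃ j, Metric.closedBall (b j) ε) →
      ‖lam k‖ ≤ Real.sqrt 2 * ε := by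
    rintro ε hε ⟨b, hcov⟩
    have hzj : ∀ j, j < k → lam (j + 1) ≠ 0 := by
      intro j hj h0
      have h1 := hnorm (j + 1) k (Nat.succ_le_succ (Nat.zero_le j)) hj
      rw [h0, norm_zero] at h1
      exact absurd (lt_of_lt_of_le hpos h1) (lt_irrefl 0)
    have Hdata : ∀ j, j < k →
        Nat.card {i : ℕ | 1 ≤ i ∧ lam i = lam (j + 1)} =
          finrank ℂ ↥(Module.End.maxGenEigenspace (K : B →ₗ[ℂ] B) (lam (j + 1))) ∧
        {i : ℕ | 1 ≤ i ∧ lam i = lam (j + 1)}.Finite := by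
      intro j hj
      have h1 := hmult (lam (j + 1)) (hzj j hj)
        (heig (j + 1) (Nat.succ_le_succ (Nat.zero_le j)) (hzj j hj))
      refine ⟨?_, h1.1⟩
      have h2 := h1.2
      rw [algMult, carl_aux_G_eq] at h2
      exact h2
    have Hcard : ∀ j < k, ∀ s : Finset ℕ, (∀ i ∈ s, i < k ∧ lam (i + 1) = lam (j + 1)) →
        s.card ≤ finrank ℂ ↥(Module.End.maxGenEigenspace (K : B →ₗ[ℂ] B) (lam (j + 1))) := by
      intro j hj s hs
      obtain ⟨hcardeq, hfin⟩ := Hdata j hj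
      rw [← hcardeq, Nat.card_coe_set_eq, Set.ncard_eq_toFinset_card _ hfin]
      refine Finset.card_le_card_of_injOn (fun i => i + 1) ?_ ?_
      · intro i hi
        rw [Finset.mem_coe, Set.Finite.mem_toFinset]
        exact ⟨Nat.succ_le_succ (Nat.zero_le i), (hs i hi).2⟩
      · intro a _ c _ h
        have h' : a + 1 = c + 1 := h
        omega
    have Hfd : ∀ j < k, FiniteDimensional ℂ
        ↥(Module.End.maxGenEigenspace (K : B →ₗ[ℂ] B) (lam (j + 1))) := by
      intro j hj
      apply FiniteDimensional.of_finrank_pos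
      have h1 := Hcard j hj {j} (by
        intro i hi
        rw [Finset.mem_singleton] at hi
        subst hi
        exact ⟨hj, rfl⟩)
      simpa using lt_of_lt_of_le (by norm_num) h1
    obtain ⟨M, hMinv, hMfd, hfrC, hfrR, hdet⟩ := carl_exists_subspace K lam k Hfd Hcard
    haveI := hMfd
    haveI : Nontrivial ↥M := by
      refine Module.nontrivial_of_finrank_pos (R := ℂ) ?_
      rw [hfrC]; omega
    set m : ℕ := 2 * k + 1 with hm
    obtain ⟨c, hc⟩ := carl_cover_iterate K b hε hcov m
    set F : ↥M →ₗ[ℂ] ↥M := (K : B →ₗ[ℂ] B).restrict hMinv with hFdef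
    have hpowcoe : ∀ (n : ℕ) (x : ↥M), (((F ^ n) x : ↥M) : B) = (⇑K)^[n] (x : B) := by
      intro n
      induction n with
      | zero => intro x; simp
      | succ n ih =>
        intro x
        rw [pow_succ, Module.End.mul_apply, ih, Function.iterate_succ_apply]
        congr 1
    have hchoice : ∀ τ : Fin m → Fin (2 ^ (k - 1)), ∃ y : ↥M,
        (∃ w : ↥M, (w : B) ∈ Metric.closedBall (c τ) (ε ^ m)) →
        (y : B) ∈ Metric.closedBall (c τ) (ε ^ m) := by
      intro τ
      by_cases h : ∃ w : ↥M, (w : B) ∈ Metric.closedBall (c τ) (ε ^ m)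
      · obtain ⟨w, hw⟩ := h
        exact ⟨w, fun _ => hw⟩
      · exact ⟨0, fun hh => absurd hh h⟩
    choose y hy using hchoice
    have hcov3 : ⇑((F ^ m).restrictScalars ℝ) '' Metric.closedBall 0 1 ⊆
        ⋃ τ, Metric.closedBall (y τ) (2 * ε ^ m) := by
      rintro _ ⟨x, hx, rfl⟩
      have hxB : (x : B) ∈ Metric.closedBall (0 : B) 1 := by
        rw [Metric.mem_closedBall, dist_zero_right] at hx ⊢
        exact hx
      have h1 : (⇑K)^[m] (x : B) ∈ ⋃ t, Metric.closedBall (c t) (ε ^ m) := hc ⟨x, hxB, rfl⟩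
      obtain ⟨τ, hτ⟩ := Set.mem_iUnion.mp h1
      have h2 : ((((F ^ m).restrictScalars ℝ) x : ↥M) : B) = (⇑K)^[m] (x : B) := hpowcoe m x
      refine Set.mem_iUnion.mpr ⟨τ, ?_⟩
      have h3 : ((y τ : ↥M) : B) ∈ Metric.closedBall (c τ) (ε ^ m) :=
        hy τ ⟨((F ^ m).restrictScalars ℝ) x, h2 ▸ hτ⟩
      rw [Metric.mem_closedBall] at h3 hτ ⊢
      have h4 : dist (((F ^ m).restrictScalars ℝ) x) (y τ) =
          dist ((((F ^ m).restrictScalars ℝ) x : ↥M) : B) ((y τ : ↥M) : B) := rfl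
      rw [h4, h2]
      calc dist ((⇑K)^[m] (x : B)) ((y τ : ↥M) : B)
          ≤ dist ((⇑K)^[m] (x : B)) (c τ) + dist (c τ) ((y τ : ↥M) : B) := dist_triangle _ _ _
      _ ≤ ε ^ m + ε ^ m := add_le_add hτ (by rw [dist_comm]; exact h3)
      _ = 2 * ε ^ m := by ring
    have hdetle := carl_det_le_of_cover ((F ^ m).restrictScalars ℝ) y
      (r := 2 * ε ^ m) (by positivity) hcov3
    have hres : (F ^ m).restrictScalars ℝ = (F.restrictScalars ℝ) ^ m := by
      ext x
      simp [Module.End.pow_apply]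
    set D : ℝ := ∏ j ∈ Finset.range k, ‖lam (j + 1)‖ ^ 2 with hD
    have hD0 : 0 ≤ D := Finset.prod_nonneg fun j _ => sq_nonneg _
    have hdetpow : LinearMap.det ((F ^ m).restrictScalars ℝ) = D ^ m := by
      rw [hres, map_pow, hdet]
    have hDge : (‖lam k‖ ^ 2) ^ k ≤ D := by
      rw [hD]
      have h1 : ∏ _j ∈ Finset.range k, ‖lam k‖ ^ 2 = (‖lam k‖ ^ 2) ^ k := by
        rw [Finset.prod_const, Finset.card_range]
      rw [← h1]
      refine Finset.prod_le_prod (fun j _ => sq_nonneg _) (fun j hj => ?_)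
      have := hnorm (j + 1) k (Nat.succ_le_succ (Nat.zero_le j)) (Finset.mem_range.mp hj)
      exact pow_le_pow_left₀ (norm_nonneg _) this 2
    -- put everything together numerically
    rw [hdetpow, abs_of_nonneg (pow_nonneg hD0 m), Fintype.card_fun, Fintype.card_fin,
      Fintype.card_fin, hfrR] at hdetle
    push_cast at hdetle
    by_contra hcon
    push_neg at hcon
    have hsε : 0 ≤ Real.sqrt 2 * ε := by positivity
    have h6 : (Real.sqrt 2 * ε) ^ (2 * k * m) < ‖lam k‖ ^ (2 * k * m) :=
      pow_lt_pow_left₀ hcon hsε (by positivity)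
    have h7 : ‖lam k‖ ^ (2 * k * m) ≤ D ^ m := by
      calc ‖lam k‖ ^ (2 * k * m) = ((‖lam k‖ ^ 2) ^ k) ^ m := by
            rw [← pow_mul, ← pow_mul, mul_assoc]
      _ ≤ D ^ m := pow_le_pow_left₀ (pow_nonneg (sq_nonneg _) k) hDge m
    have h8 : (2 : ℝ) ^ ((k - 1) * m + 2 * k) < 2 ^ (k * m) := by
      have hlt : (k - 1) * m + 2 * k < k * m := by
        have hk1 : k - 1 + 1 = k := Nat.succ_pred_eq_of_pos hk
        have : k * m = (k - 1) * m + m := by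
          conv_lhs => rw [← hk1]
          ring
        omega
      exact pow_lt_pow_right₀ one_lt_two hlt
    have h9 : D ^ m ≤ 2 ^ ((k - 1) * m + 2 * k) * ε ^ (2 * k * m) := by
      have he : ((2 : ℝ) ^ (k - 1)) ^ m * (2 * ε ^ m) ^ (2 * k) =
          2 ^ ((k - 1) * m + 2 * k) * ε ^ (2 * k * m) := by
        rw [← pow_mul, mul_pow, ← pow_mul, show m * (2 * k) = 2 * k * m by ring, pow_add]
        ring
      rw [← he]
      exact hdetle
    have h10 : (Real.sqrt 2 * ε) ^ (2 * k * m) = 2 ^ (k * m) * ε ^ (2 * k * m) := by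
      rw [mul_pow]
      congr 1
      rw [show 2 * k * m = 2 * (k * m) by ring, pow_mul, Real.sq_sqrt (by norm_num : (0:ℝ) ≤ 2)]
    have h11 : ‖lam k‖ ^ (2 * k * m) < ‖lam k‖ ^ (2 * k * m) := by
      calc ‖lam k‖ ^ (2 * k * m) ≤ D ^ m := h7
      _ ≤ 2 ^ ((k - 1) * m + 2 * k) * ε ^ (2 * k * m) := h9
      _ < 2 ^ (k * m) * ε ^ (2 * k * m) := by
          exact mul_lt_mul_of_pos_right h8 (by positivity)
      _ = (Real.sqrt 2 * ε) ^ (2 * k * m) := h10.symm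
      _ < ‖lam k‖ ^ (2 * k * m) := h6
    exact absurd h11 (lt_irrefl _)
  -- conclude
  have hS : {ε : ℝ | 0 < ε ∧ ∃ b : Fin (2 ^ (k - 1)) → B,
      ⇑K '' Metric.closedBall 0 1 ⊆ ⋃ j, Metric.closedBall (b j) ε}.Nonempty := by
    refine ⟨‖K‖ + 1, by positivity, fun _ => 0, ?_⟩
    rintro _ ⟨x, hx, rfl⟩
    rw [Metric.mem_closedBall, dist_zero_right] at hx
    refine Set.mem_iUnion.mpr ⟨⟨0, Nat.pow_pos (by norm_num)⟩, ?_⟩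
    rw [Metric.mem_closedBall, dist_zero_right]
    calc ‖K x‖ ≤ ‖K‖ * ‖x‖ := K.le_opNorm x
    _ ≤ ‖K‖ * 1 := by
        exact mul_le_mul_of_nonneg_left hx (norm_nonneg K)
    _ ≤ ‖K‖ + 1 := by linarith [norm_nonneg K]
  have hle : ‖lam k‖ / Real.sqrt 2 ≤ entropyNumber k K := by
    rw [entropyNumber]
    refine le_csInf hS ?_
    rintro ε ⟨hε, hbe⟩
    rw [div_le_iff₀ (Real.sqrt_pos.mpr (by norm_num))]
    rw [mul_comm]
    exact hkey ε hε hbe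
  calc ‖lam k‖ = Real.sqrt 2 * (‖lam k‖ / Real.sqrt 2) := by
        rw [mul_div_cancel₀ _ (ne_of_gt (Real.sqrt_pos.mpr (by norm_num : (0:ℝ) < 2)))]
  _ ≤ Real.sqrt 2 * entropyNumber k K := mul_le_mul_of_nonneg_left hle (Real.sqrt_nonneg 2)
end
end
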